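/- Let (X_i)_{i ∈ ι} be an arbitrary family of topological spaces, each of which is a Baire space and has a countable base (is second countable). Then the product Π_{i ∈ ι} X_i with the Tychonoff product topology is a Baire space. -/

import Mathlib

open Set Topology TopologicalSpace

namespace OxtobyAux

variable {ι : Type*} {X : ι → Type*} [∀ i, TopologicalSpace (X i)]

/-- The subset of the product determined by coordinatewise constraints. -/
def cylB (C : ∀ i, Set (X i)) : Set (∀ i, X i) := {x | ∀ i, x i ∈ C i}

/-- An open box with nonempty open sides, all but finitely many of which are `univ`. -/
structure IsBox (C : ∀ i, Set (X i)) : Prop where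
  opn : ∀ i, IsOpen (C i)
  ne : ∀ i, (C i).Nonempty
  fin : {i | C i ≠ univ}.Finite

theorem IsBox.isOpen_cylB {C : ∀ i, Set (X i)} (h : IsBox C) : IsOpen (cylB C) := by
  have he : cylB C = ⋂ i ∈ {i | C i ≠ univ}, (fun x : ∀ i, X i => x i) ⁻¹' C i := by
    ext x
    simp only [cylB, mem_setOf_eq, mem_iInter, mem_preimage]
    refine ⟨fun hx i _ => hx i, fun hx i => ?_⟩
    by_cases hc : C i = univ
    · simp [hc]
    · exact hx i hc
  rw [he]
  exact h.fin.isOpen_biInter fun i _ => (continuous_apply i).isOpen_preimage _ (h.opn i)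

theorem IsBox.nonempty_cylB {C : ∀ i, Set (X i)} (h : IsBox C) : (cylB C).Nonempty :=
  ⟨fun i => (h.ne i).choose, fun i => (h.ne i).choose_spec⟩

theorem exists_box_of_mem_open {G : Set (∀ i, X i)} (hG : IsOpen G) {x} (hx : x ∈ G) :
    ∃ C, IsBox C ∧ x ∈ cylB C ∧ cylB C ⊆ G := by
  classical
  obtain ⟨I, u, hu, hsub⟩ := isOpen_pi_iff.1 hG x hx
  refine ⟨fun i => if i ∈ I then u i else univ, ⟨fun i => ?_, fun i => ?_, ?_⟩, fun i => ?_, ?_⟩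
  · by_cases hi : i ∈ I
    · simpa [hi] using (hu i hi).1
    · simp [hi]
  · by_cases hi : i ∈ I
    · exact ⟨x i, by simpa [hi] using (hu i hi).2⟩
    · exact ⟨x i, by simp [hi]⟩
  · exact (I.finite_toSet).subset fun i hi => by
      by_contra h; exact hi (if_neg fun h' => h (Finset.mem_coe.2 h'))
  · by_cases hi : i ∈ I
    · simpa [hi] using (hu i hi).2
    · simp [hi]
  · intro y hy
    refine hsub fun i hi => ?_
    have := hy i
    simp only [] at this
    rwa [if_pos (Finset.mem_coe.1 hi)] at this

/-- Shrink a box into a dense open set. -/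
theorem exists_box_subset {G : Set (∀ i, X i)} (hGo : IsOpen G) (hGd : Dense G)
    {B} (hB : IsBox B) : ∃ C, IsBox C ∧ (∀ i, C i ⊆ B i) ∧ cylB C ⊆ G := by
  obtain ⟨x, hxB, hxG⟩ := hGd.inter_open_nonempty _ hB.isOpen_cylB hB.nonempty_cylB
  obtain ⟨D, hD, hxD, hDG⟩ := exists_box_of_mem_open hGo hxG
  refine ⟨fun i => D i ∩ B i, ⟨fun i => (hD.opn i).inter (hB.opn i),
    fun i => ⟨x i, hxD i, hxB i⟩, ?_⟩, fun i => inter_subset_right, fun y hy => hDG fun i => (hy i).1⟩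
  exact (hD.fin.union hB.fin).subset fun i hi => by
    by_contra h
    simp only [mem_union, mem_setOf_eq, not_or, not_not] at h
    exact hi (by simp [h.1, h.2])

set_option linter.unusedSectionVars false


/-- The set of boxes with sides from given countable collections supported inside a countable
set of coordinates is countable. -/
theorem countable_boxes (𝒞 : ∀ i, Set (Set (X i))) (hc : ∀ i, (𝒞 i).Countable)
    (S : Set ι) (hS : S.Countable) :
    {C : ∀ i, Set (X i) | {i | C i ≠ univ}.Finite ∧
      ∀ i, C i = univ ∨ (C i ∈ 𝒞 i ∧ i ∈ S)}.Countable := by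
  classical
  have hsub : {C : ∀ i, Set (X i) | {i | C i ≠ univ}.Finite ∧
      ∀ i, C i = univ ∨ (C i ∈ 𝒞 i ∧ i ∈ S)} ⊆
      ⋃ t ∈ {t : Set ι | t.Finite ∧ t ⊆ S},
        {C : ∀ i, Set (X i) | (∀ i, C i = univ ∨ C i ∈ 𝒞 i) ∧ ∀ i ∉ t, C i = univ} := by
    rintro C ⟨hfin, hmem⟩
    have hm : {i | C i ≠ univ} ∈ {t : Set ι | t.Finite ∧ t ⊆ S} := by
      refine ⟨hfin, fun i hi => ?_⟩
      rcases hmem i with h | h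
      · exact absurd h hi
      · exact h.2
    exact mem_biUnion hm ⟨fun i => (hmem i).imp id And.left, fun i hi => not_not.1 hi⟩
  refine Set.Countable.mono hsub ?_
  refine Set.Countable.biUnion (countable_setOf_finite_subset hS) fun t ht => ?_
  obtain ⟨htf, -⟩ := ht
  haveI : Finite ↥t := htf.to_subtype
  haveI : ∀ i : t, Countable {s : Set (X i) // s ∈ insert univ (𝒞 (i : ι))} := fun i =>
    (Set.Countable.insert _ (hc i)).to_subtype
  rw [← Set.countable_coe_iff]
  refine Function.Injective.countable
    (f := fun C : {C : ∀ i, Set (X i) | (∀ i, C i = univ ∨ C i ∈ 𝒞 i) ∧ ∀ i ∉ t, C i = univ} =>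
      fun i : t => (⟨C.1 i, (C.2.1 i).elim (fun h => h ▸ mem_insert _ _) (fun h => mem_insert_of_mem _ h)⟩ :
        {s : Set (X i) // s ∈ insert univ (𝒞 (i : ι))})) ?_
  intro C D h
  apply Subtype.ext
  funext i
  by_cases hi : i ∈ t
  · exact congrArg Subtype.val (congrFun h ⟨i, hi⟩)
  · rw [C.2.2 i hi, D.2.2 i hi]

/-- Baire property transfers along a continuous open surjection. -/
theorem baire_of_openMap {A B : Type*} [TopologicalSpace A] [TopologicalSpace B] [BaireSpace A]
    {r : A → B} (hc : Continuous r) (ho : IsOpenMap r) (hs : Function.Surjective r) :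
    BaireSpace B := by
  constructor
  intro f hfo hfd
  have h1 : ∀ n, Dense (r ⁻¹' f n) := by
    intro n
    rw [dense_iff_inter_open]
    rintro U hU ⟨a, ha⟩
    obtain ⟨y, hyU, hyf⟩ := (hfd n).inter_open_nonempty _ (ho U hU) ⟨r a, mem_image_of_mem r ha⟩
    obtain ⟨b, hbU, rfl⟩ := hyU
    exact ⟨b, hbU, hyf⟩
  have h2 : Dense (⋂ n, r ⁻¹' f n) :=
    dense_iInter_of_isOpen_nat (fun n => (hfo n).preimage hc) h1
  rw [dense_iff_inter_open]
  rintro U hU ⟨b, hb⟩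
  obtain ⟨a, rfl⟩ := hs b
  obtain ⟨a', ha'U, ha'⟩ := h2.inter_open_nonempty _ (hU.preimage hc) ⟨a, hb⟩
  exact ⟨r a', ha'U, by simpa [mem_iInter] using ha'⟩


section NatProd

variable (Y : ℕ → Type*) [∀ n, TopologicalSpace (Y n)]

/-- A box whose sides below `m` are unconstrained. -/
def GoodPast (m : ℕ) (C : ∀ n, Set (Y n)) : Prop := IsBox C ∧ ∀ n < m, C n = univ

/-- Points agreeing with `p` below `m` and lying in the box `C`. -/
def cylp (m : ℕ) (p : ∀ n, Y n) (C : ∀ n, Set (Y n)) : Set (∀ n, Y n) :=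
  {x | (∀ n < m, x n = p n) ∧ ∀ n, x n ∈ C n}

/-- The slice of `G` at the prefix of `p` of length `m` is "dense open" with respect to boxes. -/
def Inv (G : Set (∀ n, Y n)) (m : ℕ) (p : ∀ n, Y n) : Prop :=
  ∀ B, GoodPast Y m B → ∃ C, GoodPast Y m C ∧ (∀ n, C n ⊆ B n) ∧ cylp Y m p C ⊆ G

theorem inv_zero {G : Set (∀ n, Y n)} (hGo : IsOpen G) (hGd : Dense G) (p : ∀ n, Y n) :
    Inv Y G 0 p := by
  intro B hB
  obtain ⟨C, hC, hCB, hCG⟩ := exists_box_subset hGo hGd hB.1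
  exact ⟨C, ⟨hC, fun n hn => absurd hn (Nat.not_lt_zero n)⟩, hCB, fun x hx => hCG fun n => hx.2 n⟩

variable [∀ n, BaireSpace (Y n)] [∀ n, SecondCountableTopology (Y n)] [∀ n, Nonempty (Y n)]

theorem inv_step {G : ℕ → Set (∀ n, Y n)} (m : ℕ) (p : ∀ n, Y n)
    (hp : ∀ k, Inv Y (G k) m p) {O : Set (Y m)} (hO : IsOpen O) (hOne : O.Nonempty) :
    ∃ x ∈ O, ∀ k, Inv Y (G k) (m + 1) (Function.update p m x) := by
  classical
  set F : Set (∀ n, Set (Y n)) :=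
    {V | GoodPast Y (m+1) V ∧ ∀ n, V n = univ ∨ V n ∈ countableBasis (Y n)} with hFdef
  have hFc : F.Countable := by
    refine (countable_boxes (fun n => countableBasis (Y n))
      (fun n => countable_countableBasis _) univ countable_univ).mono ?_
    rintro V ⟨⟨hbox, -⟩, h2⟩
    exact ⟨hbox.fin, fun n => (h2 n).imp id (fun h => ⟨h, mem_univ n⟩)⟩
  let U : (∀ n, Set (Y n)) → ℕ → Set (Y m) := fun V k =>
    {y | ∃ (Uo : Set (Y m)) (C : ∀ n, Set (Y n)), IsOpen Uo ∧ y ∈ Uo ∧ GoodPast Y (m+1) C ∧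
      (∀ n, C n ⊆ V n) ∧ ∀ y' ∈ Uo, cylp Y (m+1) (Function.update p m y') C ⊆ G k}
  have hUo : ∀ V k, IsOpen (U V k) := by
    intro V k
    rw [isOpen_iff_forall_mem_open]
    rintro y ⟨Uo, C, h1, h2, h3, h4, h5⟩
    exact ⟨Uo, fun y'' hy'' => ⟨Uo, C, h1, hy'', h3, h4, h5⟩, h1, h2⟩
  have hUd : ∀ V, V ∈ F → ∀ k, Dense (U V k) := by
    rintro V ⟨hVgood, -⟩ k
    rw [dense_iff_inter_open]
    rintro O' hO' hO'ne
    set B : ∀ n, Set (Y n) := Function.update V m O' with hBdef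
    have hBgood : GoodPast Y m B := by
      refine ⟨⟨fun n => ?_, fun n => ?_, ?_⟩, fun n hn => ?_⟩
      · rcases eq_or_ne n m with rfl | hne
        · rw [hBdef, Function.update_self]; exact hO'
        · rw [hBdef, Function.update_of_ne hne]; exact hVgood.1.opn n
      · rcases eq_or_ne n m with rfl | hne
        · rw [hBdef, Function.update_self]; exact hO'ne
        · rw [hBdef, Function.update_of_ne hne]; exact hVgood.1.ne n
      · refine ((hVgood.1.fin.insert m).subset fun n hn => ?_)
        have hn' : Function.update V m O' n ≠ univ := hn
        rcases eq_or_ne n m with rfl | hne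
        · exact mem_insert _ _
        · rw [Function.update_of_ne hne] at hn'; exact mem_insert_of_mem _ hn' 
      · rw [hBdef, Function.update_of_ne (Nat.ne_of_lt hn)]
        exact hVgood.2 n (Nat.lt_succ_of_lt hn)
    obtain ⟨C', hC'good, hC'B, hC'G⟩ := hp k B hBgood
    have hUoO' : C' m ⊆ O' := by
      have := hC'B m
      rwa [hBdef, Function.update_self] at this
    set C : ∀ n, Set (Y n) := Function.update C' m univ with hCdef
    have hCgood : GoodPast Y (m+1) C := by
      refine ⟨⟨fun n => ?_, fun n => ?_, ?_⟩, fun n hn => ?_⟩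
      · rcases eq_or_ne n m with rfl | hne
        · rw [hCdef, Function.update_self]; exact isOpen_univ
        · rw [hCdef, Function.update_of_ne hne]; exact hC'good.1.opn n
      · rcases eq_or_ne n m with rfl | hne
        · rw [hCdef, Function.update_self]; exact univ_nonempty
        · rw [hCdef, Function.update_of_ne hne]; exact hC'good.1.ne n
      · refine hC'good.1.fin.subset fun n hn => ?_
        have hn' : Function.update C' m univ n ≠ univ := hn
        rcases eq_or_ne n m with rfl | hne
        · rw [Function.update_self] at hn'
          exact absurd rfl hn'
        · rw [Function.update_of_ne hne] at hn'
          exact hn' 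
      · rcases Nat.lt_succ_iff_lt_or_eq.1 hn with h | rfl
        · rw [hCdef, Function.update_of_ne (Nat.ne_of_lt h)]; exact hC'good.2 n h
        · rw [hCdef, Function.update_self]
    have hCV : ∀ n, C n ⊆ V n := by
      intro n
      rcases eq_or_ne n m with rfl | hne
      · rw [hVgood.2 n (Nat.lt_succ_self n)]; exact subset_univ _
      · rw [hCdef, Function.update_of_ne hne]
        have := hC'B n
        rwa [hBdef, Function.update_of_ne hne] at this
    have hkey : ∀ y' ∈ C' m, cylp Y (m+1) (Function.update p m y') C ⊆ G k := by
      rintro y' hy' x ⟨h1, h2⟩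
      apply hC'G
      refine ⟨fun n hn => ?_, fun n => ?_⟩
      · have := h1 n (Nat.lt_succ_of_lt hn)
        rwa [Function.update_of_ne (Nat.ne_of_lt hn)] at this
      · rcases eq_or_ne n m with rfl | hne
        · have := h1 n (Nat.lt_succ_self n)
          rw [Function.update_self] at this
          rw [this]; exact hy'
        · have := h2 n
          rwa [hCdef, Function.update_of_ne hne] at this
    obtain ⟨y, hy⟩ := hC'good.1.ne m
    exact ⟨y, hUoO' hy, C' m, C, hC'good.1.opn m, hy, hCgood, hCV, hkey⟩
  haveI := hFc.to_subtype
  have hD : Dense (⋂ z : F × ℕ, U z.1 z.2) :=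
    dense_iInter_of_isOpen (fun z => hUo z.1 z.2) (fun z => hUd z.1.1 z.1.2 z.2)
  obtain ⟨x, hxO, hxD⟩ := hD.inter_open_nonempty O hO hOne
  refine ⟨x, hxO, fun k B hB => ?_⟩
  have hsel : ∀ n, ∃ v : Set (Y n), (B n = univ → v = univ) ∧
      (B n ≠ univ → v ∈ countableBasis (Y n)) ∧ v ⊆ B n ∧ v.Nonempty := by
    intro n
    by_cases h : B n = univ
    · exact ⟨univ, fun _ => rfl, fun h' => absurd h h', by rw [h], univ_nonempty⟩
    · obtain ⟨b, hb⟩ := hB.1.ne n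
      obtain ⟨v, hv1, hv2, hv3⟩ :=
        (isBasis_countableBasis (Y n)).exists_subset_of_mem_open hb (hB.1.opn n)
      exact ⟨v, fun h' => absurd h' h, fun _ => hv1, hv3, ⟨b, hv2⟩⟩
  choose V hV1 hV2 hV3 hV4 using hsel
  have hVF : V ∈ F := by
    refine ⟨⟨⟨fun n => ?_, hV4, ?_⟩, fun n hn => hV1 n (hB.2 n hn)⟩, fun n => ?_⟩
    · by_cases h : B n = univ
      · rw [hV1 n h]; exact isOpen_univ
      · exact isOpen_of_mem_countableBasis (hV2 n h)
    · refine hB.1.fin.subset fun n hn => ?_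
      have hn' : V n ≠ univ := hn
      exact fun h => hn' (hV1 n h)
    · by_cases h : B n = univ
      · exact Or.inl (hV1 n h)
      · exact Or.inr (hV2 n h)
  have hxU : x ∈ U V k := mem_iInter.1 hxD (⟨V, hVF⟩, k)
  obtain ⟨Uo, C, hUoOpen, hxUo, hCgood, hCV, hkey⟩ := hxU
  exact ⟨C, hCgood, fun n => (hCV n).trans (hV3 n), hkey x hxUo⟩

theorem GoodPast.update_univ {m : ℕ} {D : ∀ n, Set (Y n)} [Nonempty (Y m)]
    (h : GoodPast Y m D) : GoodPast Y (m+1) (Function.update D m univ) := by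
  refine ⟨⟨fun n => ?_, fun n => ?_, ?_⟩, fun n hn => ?_⟩
  · rcases eq_or_ne n m with rfl | hne
    · rw [Function.update_self]; exact isOpen_univ
    · rw [Function.update_of_ne hne]; exact h.1.opn n
  · rcases eq_or_ne n m with rfl | hne
    · rw [Function.update_self]; exact univ_nonempty
    · rw [Function.update_of_ne hne]; exact h.1.ne n
  · refine h.1.fin.subset fun n hn => ?_
    have hn' : Function.update D m univ n ≠ univ := hn
    rcases eq_or_ne n m with rfl | hne
    · rw [Function.update_self] at hn'; exact absurd rfl hn'
    · rw [Function.update_of_ne hne] at hn'; exact hn'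
  · rcases Nat.lt_succ_iff_lt_or_eq.1 hn with hlt | rfl
    · rw [Function.update_of_ne (Nat.ne_of_lt hlt)]; exact h.2 n hlt
    · rw [Function.update_self]

theorem baire_pi_nat : BaireSpace (∀ n, Y n) := by
  constructor
  intro G hGo hGd
  rw [dense_iff_inter_open]
  rintro u hu ⟨x₀, hx₀⟩
  obtain ⟨B₀, hB₀box, hx₀B, hB₀u⟩ := exists_box_of_mem_open hu hx₀
  classical
  let St := ((∀ n, Y n) × (∀ n, Set (Y n)))
  let OK : ℕ → St → Prop := fun m s => (∀ k, Inv Y (G k) m s.1) ∧ GoodPast Y m s.2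
  let Rel : ℕ → St → St → Prop := fun m s s' =>
    (∀ n, n ≠ m → s'.1 n = s.1 n) ∧ (∀ n, n ≠ m → s'.2 n ⊆ s.2 n) ∧ s'.1 m ∈ s.2 m ∧
      cylp Y (m+1) s'.1 s'.2 ⊆ G m ∧ OK (m+1) s'
  have hstep : ∀ m s, ∃ s', OK m s → Rel m s s' := by
    intro m s
    by_cases hOK : OK m s
    swap
    · exact ⟨s, fun h => absurd h hOK⟩
    obtain ⟨hinv, hgood⟩ := hOK
    obtain ⟨D, hDgood, hDs, hDG⟩ := hinv m s.2 hgood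
    obtain ⟨x, hxD, hinv'⟩ := inv_step Y m s.1 hinv (hDgood.1.opn m) (hDgood.1.ne m)
    refine ⟨(Function.update s.1 m x, Function.update D m univ),
      fun _ => ⟨fun n hn => Function.update_of_ne hn _ _, fun n hn => ?_, ?_, ?_, hinv', ?_⟩⟩
    · show Function.update D m univ n ⊆ s.2 n
      rw [Function.update_of_ne hn]; exact hDs n
    · show Function.update s.1 m x m ∈ s.2 m
      rw [Function.update_self]; exact hDs m hxD
    · rintro z ⟨h1, h2⟩
      dsimp only at h1 h2
      apply hDG
      refine ⟨fun n hn => ?_, fun n => ?_⟩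
      · have := h1 n (Nat.lt_succ_of_lt hn)
        rwa [Function.update_of_ne (Nat.ne_of_lt hn)] at this
      · rcases eq_or_ne n m with rfl | hne
        · have := h1 n (Nat.lt_succ_self n)
          rw [Function.update_self] at this
          rw [this]; exact hxD
        · have := h2 n
          rwa [Function.update_of_ne hne] at this
    · exact hDgood.update_univ
  choose f hf using hstep
  let st : ℕ → St := fun m => Nat.rec (x₀, B₀) (fun m s => f m s) m
  have hOK : ∀ m, OK m (st m) := by
    intro m
    induction m with
    | zero =>
      exact ⟨fun k => inv_zero Y (hGo k) (hGd k) x₀,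
        hB₀box, fun n hn => absurd hn (Nat.not_lt_zero n)⟩
    | succ m ih => exact ((hf m (st m)) ih).2.2.2.2
  have hrel : ∀ m, Rel m (st m) (st (m+1)) := fun m => hf m (st m) (hOK m)
  let x : ∀ n, Y n := fun n => (st (n+1)).1 n
  have hstab : ∀ n m, n < m → (st m).1 n = x n := by
    intro n m hm
    induction m with
    | zero => exact absurd hm (Nat.not_lt_zero n)
    | succ m ih =>
      rcases Nat.lt_succ_iff_lt_or_eq.1 hm with h | rfl
      · rw [(hrel m).1 n (Nat.ne_of_lt h)]; exact ih h
      · rfl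
  have hchain : ∀ n m m', m ≤ m' → m' ≤ n → (st m').2 n ⊆ (st m).2 n := by
    intro n m m' hmm'
    induction m', hmm' using Nat.le_induction with
    | base => exact fun _ => subset_rfl
    | succ m' hmm' ih =>
      intro h
      refine subset_trans ?_ (ih (Nat.le_of_succ_le h))
      exact (hrel m').2.1 n (by omega)
  have hmem : ∀ n m, m ≤ n → x n ∈ (st m).2 n := fun n m hmn =>
    hchain n m n hmn le_rfl ((hrel n).2.2.1)
  refine ⟨x, hB₀u ?_, ?_⟩
  · exact fun n => hmem n 0 (Nat.zero_le n)
  · rw [mem_iInter]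
    intro k
    apply (hrel k).2.2.2.1
    refine ⟨fun n hn => (hstab n (k+1) hn).symm, fun n => ?_⟩
    rcases Nat.lt_or_ge n (k+1) with h | h
    · rw [(hOK (k+1)).2.2 n h]; exact mem_univ _
    · exact hmem n (k+1) h

end NatProd

section Main

theorem baire_of_subsingleton {A : Type*} [TopologicalSpace A] [Subsingleton A] :
    BaireSpace A := by
  constructor
  intro f ho hd
  rcases isEmpty_or_nonempty A with h | h
  · intro x; exact (h.false x).elim
  · intro x
    have hx : ∀ n, x ∈ f n := fun n => by
      obtain ⟨y, -, hy⟩ := (hd n).inter_open_nonempty univ isOpen_univ univ_nonempty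
      rwa [Subsingleton.elim x y]
    exact subset_closure (mem_iInter.2 hx)

theorem key (ι : Type*) (X : ι → Type*) [∀ i, TopologicalSpace (X i)] [∀ i, BaireSpace (X i)]
    [∀ i, SecondCountableTopology (X i)] [Infinite ι] [∀ i, Nonempty (X i)] :
    BaireSpace (∀ i, X i) := by
  constructor
  intro G hGo hGd
  rw [dense_iff_inter_open]
  rintro u hu ⟨x₀, hx₀⟩
  classical
  obtain ⟨B₀, hB₀box, hx₀B, hB₀u⟩ := exists_box_of_mem_open hu hx₀
  have hcex : ∀ (k : ℕ) (B : ∀ i, Set (X i)), ∃ C : ∀ i, Set (X i),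
      IsBox B → (IsBox C ∧ (∀ i, C i ⊆ B i) ∧ cylB C ⊆ G k) := by
    intro k B
    by_cases h : IsBox B
    · obtain ⟨C, h1, h2, h3⟩ := exists_box_subset (hGo k) (hGd k) h
      exact ⟨C, fun _ => ⟨h1, h2, h3⟩⟩
    · exact ⟨B, fun h' => absurd h' h⟩
  choose c hc using hcex
  let bb : Set ι → Set (∀ i, Set (X i)) := fun S =>
    {B | {i | B i ≠ univ}.Finite ∧ ∀ i, B i = univ ∨ (B i ∈ countableBasis (X i) ∧ i ∈ S)}
  have hbbc : ∀ S : Set ι, S.Countable → (bb S).Countable := fun S hS =>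
    countable_boxes _ (fun i => countable_countableBasis _) S hS
  have hbbbox : ∀ (S' : Set ι) (B), B ∈ bb S' → IsBox B := by
    rintro S' B ⟨hfin, hmem⟩
    refine ⟨fun i => ?_, fun i => ?_, hfin⟩
    · rcases hmem i with h | h
      · rw [h]; exact isOpen_univ
      · exact isOpen_of_mem_countableBasis h.1
    · rcases hmem i with h | h
      · rw [h]; exact univ_nonempty
      · exact nonempty_of_mem_countableBasis h.1
  let emb := Infinite.natEmbedding ι
  let S : ℕ → Set ι := fun t =>
    Nat.rec ({i | B₀ i ≠ univ} ∪ range emb)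
      (fun _ St => St ∪ ⋃ (k : ℕ), ⋃ B ∈ bb St, {i | c k B i ≠ univ}) t
  have hS0 : S 0 = {i | B₀ i ≠ univ} ∪ range emb := rfl
  have hSS : ∀ t, S (t+1) = S t ∪ ⋃ (k : ℕ), ⋃ B ∈ bb (S t), {i | c k B i ≠ univ} :=
    fun t => rfl
  have hSc : ∀ t, (S t).Countable := by
    intro t
    induction t with
    | zero => exact (hB₀box.fin.countable).union (countable_range emb)
    | succ t ih =>
      rw [hSS t]
      refine ih.union (countable_iUnion fun k =>
        Set.Countable.biUnion (hbbc _ ih) fun B hB => ?_)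
      exact ((hc k B (hbbbox _ B hB)).1.fin).countable
  have hSmono : ∀ t t', t ≤ t' → S t ⊆ S t' := by
    intro t t' h
    induction t', h using Nat.le_induction with
    | base => exact subset_rfl
    | succ t' h ih => exact ih.trans (by rw [hSS t']; exact subset_union_left)
  set Sω : Set ι := ⋃ t, S t with hSωdef
  have hSωc : Sω.Countable := countable_iUnion hSc
  haveI : Countable ↥Sω := hSωc.to_subtype
  haveI : Infinite ↥Sω := Infinite.of_injective
    (fun n => (⟨emb n, mem_iUnion.2 ⟨0, Or.inr (mem_range_self n)⟩⟩ : ↥Sω))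
    (fun a b hab => emb.injective (congrArg Subtype.val hab))
  obtain ⟨den⟩ := nonempty_denumerable ↥Sω
  haveI := den
  let e : ℕ ≃ ↥Sω := (Denumerable.eqv ↥Sω).symm
  haveI hQB : BaireSpace (∀ j : ↥Sω, X ↑j) := by
    haveI := baire_pi_nat (fun n => X ↑(e n))
    have h := Homeomorph.piCongrLeft (Y := fun j : ↥Sω => X ↑j) e
    exact baire_of_openMap h.continuous h.isOpenMap h.surjective
  -- the closure property of Sω
  have hclose : ∀ (k : ℕ) (B), B ∈ bb Sω → {i | c k B i ≠ univ} ⊆ Sω ∧ IsBox (c k B) ∧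
      (∀ i, c k B i ⊆ B i) ∧ cylB (c k B) ⊆ G k := by
    rintro k B hBmem
    obtain ⟨hfin, hmem⟩ := hBmem
    have ht : ∃ t, ∀ i, B i ≠ univ → i ∈ S t := by
      have hex : ∀ i ∈ hfin.toFinset, ∃ t, i ∈ S t := by
        intro i hi
        rcases hmem i with h | h
        · exact absurd h (hfin.mem_toFinset.1 hi)
        · exact mem_iUnion.1 h.2
      choose tf htf using hex
      refine ⟨hfin.toFinset.sup (fun i => if h : i ∈ hfin.toFinset then tf i h else 0),
        fun i hiB => ?_⟩
      have hi : i ∈ hfin.toFinset := hfin.mem_toFinset.2 hiB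
      refine hSmono _ _ ?_ (htf i hi)
      have := Finset.le_sup
        (f := fun i => if h : i ∈ hfin.toFinset then tf i h else 0) hi
      rwa [dif_pos hi] at this
    obtain ⟨t, hts⟩ := ht
    have hBt : B ∈ bb (S t) := by
      refine ⟨hfin, fun i => ?_⟩
      rcases eq_or_ne (B i) univ with h | h
      · exact Or.inl h
      · rcases hmem i with h' | h'
        · exact absurd h' h
        · exact Or.inr ⟨h'.1, hts i h⟩
    have hck := hc k B (hbbbox _ B ⟨hfin, hmem⟩)
    refine ⟨?_, hck.1, hck.2.1, hck.2.2⟩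
    intro i hi
    refine mem_iUnion.2 ⟨t + 1, ?_⟩
    rw [hSS t]
    exact Or.inr (mem_iUnion.2 ⟨k, mem_biUnion hBt hi⟩)
  -- the dense open sets of the countable subproduct
  let H : ℕ → Set (∀ j : ↥Sω, X ↑j) := fun k =>
    {q | ∃ C : ∀ i, Set (X i), IsBox C ∧ {i | C i ≠ univ} ⊆ Sω ∧ cylB C ⊆ G k ∧
      ∀ j : ↥Sω, q j ∈ C ↑j}
  have hHo : ∀ k, IsOpen (H k) := by
    intro k
    rw [isOpen_iff_forall_mem_open]
    rintro q ⟨C, hC1, hC2, hC3, hC4⟩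
    refine ⟨cylB (fun j : ↥Sω => C ↑j), fun q' hq' => ⟨C, hC1, hC2, hC3, hq'⟩, ?_, hC4⟩
    refine IsBox.isOpen_cylB ⟨fun j => hC1.opn ↑j, fun j => hC1.ne ↑j, ?_⟩
    exact ((hC1.fin).preimage (Subtype.val_injective.injOn)).subset (fun j hj => hj)
  have hHd : ∀ k, Dense (H k) := by
    intro k
    rw [dense_iff_inter_open]
    rintro O hO ⟨q₀, hq₀⟩
    obtain ⟨D, hDbox, hq₀D, hDO⟩ := exists_box_of_mem_open hO hq₀
    have hsel : ∀ j : ↥Sω, ∃ w : Set (X ↑j), (D j = univ → w = univ) ∧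
        (D j ≠ univ → w ∈ countableBasis (X ↑j)) ∧ w ⊆ D j ∧ q₀ j ∈ w := by
      intro j
      by_cases h : D j = univ
      · exact ⟨univ, fun _ => rfl, fun h' => absurd h h', by rw [h], mem_univ _⟩
      · obtain ⟨w, hw1, hw2, hw3⟩ :=
          (isBasis_countableBasis (X ↑j)).exists_subset_of_mem_open (hq₀D j) (hDbox.opn j)
        exact ⟨w, fun h' => absurd h' h, fun _ => hw1, hw3, hw2⟩
    choose w hw1 hw2 hw3 hw4 using hsel
    let B : ∀ i, Set (X i) := fun i => if h : i ∈ Sω then w ⟨i, h⟩ else univ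
    have hBval : ∀ j : ↥Sω, B ↑j = w j := fun j => dif_pos j.2
    have hBbb : B ∈ bb Sω := by
      constructor
      · have hsub : {i | B i ≠ univ} ⊆ Subtype.val '' {j : ↥Sω | w j ≠ univ} := by
          intro i hi
          have hiS : i ∈ Sω := by
            by_contra h
            exact hi (dif_neg h)
          exact ⟨⟨i, hiS⟩, fun h => hi (by rw [show B i = w ⟨i, hiS⟩ from dif_pos hiS, h]), rfl⟩
        refine (Set.Finite.image _ ?_).subset hsub
        exact hDbox.fin.subset (fun j hj h => hj (hw1 j h))
      · intro i
        by_cases h : i ∈ Sω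
        · by_cases h2 : D ⟨i, h⟩ = univ
          · exact Or.inl (by rw [show B i = w ⟨i, h⟩ from dif_pos h, hw1 _ h2])
          · exact Or.inr ⟨by rw [show B i = w ⟨i, h⟩ from dif_pos h]; exact hw2 _ h2, h⟩
        · exact Or.inl (dif_neg h)
    obtain ⟨hsupc, hcbox, hcsub, hcG⟩ := hclose k B hBbb
    refine ⟨fun j => (hcbox.ne ↑j).choose, hDO (fun j => ?_),
      c k B, hcbox, hsupc, hcG, fun j => (hcbox.ne ↑j).choose_spec⟩
    have h1 : c k B ↑j ⊆ B ↑j := hcsub ↑j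
    rw [hBval j] at h1
    exact hw3 j (h1 (hcbox.ne ↑j).choose_spec)
  -- conclude
  have hB₀pull : IsBox (fun j : ↥Sω => B₀ ↑j) :=
    ⟨fun j => hB₀box.opn ↑j, fun j => hB₀box.ne ↑j,
      ((hB₀box.fin).preimage (Subtype.val_injective.injOn)).subset (fun j hj => hj)⟩
  have hDint : Dense (⋂ k, H k) := dense_iInter_of_isOpen hHo hHd
  obtain ⟨q, hqB₀, hqH⟩ :=
    hDint.inter_open_nonempty _ hB₀pull.isOpen_cylB hB₀pull.nonempty_cylB
  refine ⟨fun i => if h : i ∈ Sω then q ⟨i, h⟩ else Classical.arbitrary (X i),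
    hB₀u (fun i => ?_), mem_iInter.2 fun k => ?_⟩
  · by_cases h : i ∈ Sω
    · rw [dif_pos h]
      exact hqB₀ ⟨i, h⟩
    · have hB₀univ : B₀ i = univ := by
        by_contra hne
        exact h (mem_iUnion.2 ⟨0, Or.inl hne⟩)
      rw [hB₀univ]; exact mem_univ _
  · obtain ⟨C, hC1, hC2, hC3, hC4⟩ := mem_iInter.1 hqH k
    apply hC3
    intro i
    dsimp only
    by_cases h : i ∈ Sω
    · rw [dif_pos h]
      exact hC4 ⟨i, h⟩
    · have hCuniv : C i = univ := by
        by_contra hne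
        exact h (hC2 hne)
      rw [hCuniv]; exact mem_univ _

end Main

end OxtobyAux

open OxtobyAux in
/-- Oxtoby: an arbitrary product of second countable Baire spaces is Baire. -/
theorem baire_product_of_secondCountable (ι : Type*) (X : ι → Type*)
    [∀ i, TopologicalSpace (X i)] [∀ i, BaireSpace (X i)]
    [∀ i, SecondCountableTopology (X i)] : BaireSpace (∀ i, X i) := by
  rcases isEmpty_or_nonempty (∀ i, X i) with he | hne
  · constructor
    intro f _ _ x
    exact (he.false x).elim
  · haveI : ∀ i, Nonempty (X i) := fun i => ⟨hne.some i⟩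
    haveI hPU : BaireSpace PUnit := baire_of_subsingleton
    let Z : ι ⊕ ℕ → Type _ := Sum.elim X fun _ => PUnit
    letI iT : ∀ t, TopologicalSpace (Z t) := fun t =>
      Sum.rec (fun i => (inferInstance : TopologicalSpace (X i)))
        (fun _ => (inferInstance : TopologicalSpace PUnit)) t
    haveI iB : ∀ t, BaireSpace (Z t) := fun t =>
      Sum.rec (fun i => (inferInstance : BaireSpace (X i)))
        (fun _ => hPU) t
    haveI iS : ∀ t, SecondCountableTopology (Z t) := fun t =>
      Sum.rec (fun i => (inferInstance : SecondCountableTopology (X i)))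
        (fun _ => (inferInstance : SecondCountableTopology PUnit)) t
    haveI iN : ∀ t, Nonempty (Z t) := fun t =>
      Sum.rec (fun i => inferInstanceAs (Nonempty (X i)))
        (fun _ => inferInstanceAs (Nonempty PUnit)) t
    haveI : BaireSpace (∀ t, Z t) := @key (ι ⊕ ℕ) Z iT iB iS _ iN
    refine baire_of_openMap (A := ∀ t, Z t)
      (r := fun (p : ∀ t, Z t) (i : ι) => p (Sum.inl i)) ?_ ?_ ?_
    · exact continuous_pi fun i => continuous_apply (Sum.inl i)
    · intro V hV
      rw [isOpen_iff_forall_mem_open]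
      rintro y ⟨p, hpV, rfl⟩
      obtain ⟨C, hC, hpC, hCV⟩ := exists_box_of_mem_open hV hpV
      refine ⟨cylB (fun i : ι => C (Sum.inl i)), ?_, ?_, fun i => hpC (Sum.inl i)⟩
      · intro x hx
        refine ⟨fun t => Sum.rec (fun i => x i) (fun n => (hC.ne (Sum.inr n)).choose) t,
          hCV ?_, rfl⟩
        intro t
        rcases t with i | n
        · exact hx i
        · exact (hC.ne (Sum.inr n)).choose_spec
      · exact IsBox.isOpen_cylB ⟨fun i => hC.opn _, fun i => hC.ne _,
          ((hC.fin).preimage (Sum.inl_injective.injOn)).subset (fun i hi => hi)⟩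
    · intro x
      exact ⟨fun t => Sum.rec (fun i => x i) (fun _ => PUnit.unit) t, rfl⟩
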